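/- Bernstein division algorithm: if p(t) = Σ_{j=0}^m a_j B^m_j(t) and q(t) = Σ_{j=0}^n b_j B^n_j(t) with m ≥ n ≥ 0, p(1) = a_m ≠ 0 and q(1) = b_n ≠ 0, then there exist unique polynomials f(t) of degree ≤ m−n and r(t) of degree ≤ n−1 such that p(t) = q(t) f(t) + (1−t)^{m−n+1} r(t). -/

import Mathlib

open Polynomial

private lemma withbot_lt_succ {d : WithBot ℕ} {k : ℕ} : d < ((k + 1 : ℕ) : WithBot ℕ) ↔ d ≤ (k : WithBot ℕ) := by
  cases d with
  | bot => simpa using WithBot.bot_lt_coe (k + 1)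
  | coe a =>
    rw [Nat.cast_withBot, Nat.cast_withBot, WithBot.coe_lt_coe, WithBot.coe_le_coe]
    exact Nat.lt_add_one_iff

private lemma one_sub_X_eq : (1 - X : ℂ[X]) = -(X - C 1) := by
  rw [map_one]; ring

private lemma deg_one_sub_X_pow (k : ℕ) : ((1 - X : ℂ[X]) ^ k).degree = k := by
  rw [one_sub_X_eq, degree_pow, degree_neg, degree_X_sub_C]
  simp

private lemma one_sub_X_dvd {r : ℂ[X]} (h : r.eval 1 = 0) : (1 - X : ℂ[X]) ∣ r := by
  rw [one_sub_X_eq, neg_dvd, dvd_iff_isRoot]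
  exact h

private lemma prime_one_sub_X : Prime (1 - X : ℂ[X]) := by
  rw [one_sub_X_eq]
  exact (prime_X_sub_C 1).neg

/-- Existence core: successive approximation of `P/Q` at the point `1`. -/
private lemma exists_approx (Q : ℂ[X]) (hQ : Q.eval 1 ≠ 0) (P : ℂ[X]) (k : ℕ) :
    ∃ F : ℂ[X], F.degree < (k : WithBot ℕ) ∧ (1 - X : ℂ[X]) ^ k ∣ P - Q * F := by
  induction k with
  | zero => exact ⟨0, by simp, by simp⟩
  | succ k ih =>
    obtain ⟨F, hF, S, hS⟩ := ih
    set c : ℂ := S.eval 1 / Q.eval 1 with hc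
    refine ⟨F + C c * (1 - X) ^ k, ?_, ?_⟩
    · rw [withbot_lt_succ]
      refine (degree_add_le _ _).trans (max_le ?_ ?_)
      · exact le_of_lt (lt_of_lt_of_le hF (by exact_mod_cast le_refl _))
      · refine (degree_mul_le _ _).trans ?_
        rw [deg_one_sub_X_pow]
        calc (C c).degree + (k : WithBot ℕ) ≤ 0 + (k : WithBot ℕ) :=
              add_le_add_left (degree_C_le) _
          _ = (k : WithBot ℕ) := by simp
    · have key : P - Q * (F + C c * (1 - X) ^ k) = (1 - X) ^ k * (S - C c * Q) := by
        linear_combination hS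
      rw [key, pow_succ]
      refine mul_dvd_mul_left _ (one_sub_X_dvd ?_)
      simp [hc, div_mul_cancel₀ _ hQ]

private lemma term_degree_le (n : ℕ) (b : ℕ → ℂ) :
    (∑ j ∈ Finset.range (n + 1),
        C (b j) * (n.choose j : ℂ[X]) * X ^ j * (1 - X) ^ (n - j)).degree ≤ (n : WithBot ℕ) := by
  refine (degree_sum_le _ _).trans (Finset.sup_le fun j hj => ?_)
  have hj' : j ≤ n := Nat.lt_succ_iff.mp (Finset.mem_range.mp hj)
  have h1 : (C (b j) * (n.choose j : ℂ[X]) * X ^ j).degree ≤ (j : WithBot ℕ) := by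
    have : C (b j) * (n.choose j : ℂ[X]) * X ^ j = C (b j * n.choose j) * X ^ j := by
      simp [map_mul]
    rw [this]
    exact degree_C_mul_X_pow_le _ _
  calc (C (b j) * (n.choose j : ℂ[X]) * X ^ j * (1 - X) ^ (n - j)).degree
      ≤ (C (b j) * (n.choose j : ℂ[X]) * X ^ j).degree + ((1 - X : ℂ[X]) ^ (n - j)).degree :=
        degree_mul_le _ _
    _ ≤ (j : WithBot ℕ) + ((n - j : ℕ) : WithBot ℕ) := by
        rw [deg_one_sub_X_pow]; exact add_le_add_left h1 _
    _ = ((j + (n - j) : ℕ) : WithBot ℕ) := by exact_mod_cast rfl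
    _ = (n : WithBot ℕ) := by rw [Nat.add_sub_cancel' hj']

private lemma eval_one_sum (n : ℕ) (b : ℕ → ℂ) :
    (∑ j ∈ Finset.range (n + 1),
        C (b j) * (n.choose j : ℂ[X]) * X ^ j * (1 - X) ^ (n - j)).eval 1 = b n := by
  rw [eval_finset_sum, Finset.sum_eq_single n]
  · simp
  · intro j hj hjn
    have hlt : j < n := lt_of_le_of_ne (Nat.lt_succ_iff.mp (Finset.mem_range.mp hj)) hjn
    simp [Nat.sub_ne_zero_of_lt hlt]
  · intro h; exact absurd (Finset.self_mem_range_succ n) h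

/-- Bernstein division algorithm: if `p(1) ≠ 0`, `q(1) ≠ 0` and `m ≥ n`, there
exist unique polynomials `f` (degree ≤ m-n) and `r` (degree < n) with
`p = q f + (1-X)^{m-n+1} r`. -/
theorem bernstein_division (m n : ℕ) (hmn : n ≤ m) (a b : ℕ → ℂ)
    (ham : a m ≠ 0) (hbn : b n ≠ 0) (p q : Polynomial ℂ)
    (hp : p = ∑ j ∈ Finset.range (m + 1),
        C (a j) * (m.choose j : ℂ[X]) * X ^ j * (1 - X) ^ (m - j))
    (hq : q = ∑ j ∈ Finset.range (n + 1),
        C (b j) * (n.choose j : ℂ[X]) * X ^ j * (1 - X) ^ (n - j)) :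
    ∃! fr : Polynomial ℂ × Polynomial ℂ,
      fr.1.degree ≤ (m - n : ℕ) ∧ fr.2.degree < n ∧
        p = q * fr.1 + (1 - X) ^ (m - n + 1) * fr.2 := by
  have hq1 : q.eval 1 ≠ 0 := by rw [hq, eval_one_sum]; exact hbn
  have hdq : q.degree ≤ (n : WithBot ℕ) := by rw [hq]; exact term_degree_le n b
  have hdp : p.degree ≤ (m : WithBot ℕ) := by rw [hp]; exact term_degree_le m a
  set k : ℕ := m - n + 1 with hk
  obtain ⟨F, hdF, R, hR⟩ := exists_approx q hq1 p k
  have hdF' : F.degree ≤ ((m - n : ℕ) : WithBot ℕ) := withbot_lt_succ.mp hdF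
  have hkn : k + n = m + 1 := by omega
  have hdR : R.degree < (n : WithBot ℕ) := by
    have h1 : (k : WithBot ℕ) + R.degree ≤ (m : WithBot ℕ) := by
      rw [← deg_one_sub_X_pow k, ← degree_mul, ← hR]
      refine (degree_sub_le _ _).trans (max_le hdp ?_)
      refine (degree_mul_le _ _).trans ?_
      calc q.degree + F.degree ≤ (n : WithBot ℕ) + ((m - n : ℕ) : WithBot ℕ) :=
            add_le_add hdq hdF'
        _ = ((n + (m - n) : ℕ) : WithBot ℕ) := by exact_mod_cast rfl
        _ = (m : WithBot ℕ) := by rw [Nat.add_sub_cancel' hmn]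
    have h2 : (k : WithBot ℕ) + R.degree < (k : WithBot ℕ) + (n : WithBot ℕ) := by
      refine lt_of_le_of_lt h1 ?_
      have : ((m : ℕ) : WithBot ℕ) < ((m + 1 : ℕ) : WithBot ℕ) := by exact_mod_cast Nat.lt_succ_self m
      rw [← Nat.cast_add, hkn]
      exact this
    exact (WithBot.add_lt_add_iff_left (by simp : (k : WithBot ℕ) ≠ ⊥)).mp h2
  refine ⟨⟨F, R⟩, ⟨hdF', hdR, by linear_combination hR⟩, ?_⟩
  rintro ⟨F', R'⟩ ⟨hdF2, hdR2, heq2⟩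
  have heq1 : p = q * F + (1 - X) ^ k * R := by linear_combination hR
  have hmain : (1 - X : ℂ[X]) ^ k * (R' - R) = q * (F - F') := by
    linear_combination heq1 - heq2
  have hnd : ¬ (1 - X : ℂ[X]) ∣ q := by
    rintro ⟨s, hs⟩
    apply hq1
    rw [hs]
    simp
  have hdvd : (1 - X : ℂ[X]) ^ k ∣ (F - F') :=
    prime_one_sub_X.pow_dvd_of_dvd_mul_left k hnd ⟨R' - R, hmain.symm⟩
  have hFF : F - F' = 0 := by
    refine eq_zero_of_dvd_of_degree_lt hdvd ?_
    rw [deg_one_sub_X_pow]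
    refine lt_of_le_of_lt (degree_sub_le _ _) ?_
    refine max_lt (lt_of_le_of_lt hdF' ?_) (lt_of_le_of_lt hdF2 ?_) <;>
      exact_mod_cast Nat.lt_succ_self (m - n)
  have hF : F' = F := (sub_eq_zero.mp hFF).symm
  have hR' : R' = R := by
    have h0 : (1 - X : ℂ[X]) ^ k * (R' - R) = 0 := by rw [hmain, hFF, mul_zero]
    have hne : (1 - X : ℂ[X]) ^ k ≠ 0 := pow_ne_zero _ (by
      intro h
      have := congrArg degree h
      rw [degree_zero] at this
      have h1 : (1 - X : ℂ[X]).degree = 1 := by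
        have := deg_one_sub_X_pow 1
        simpa using this
      rw [h1] at this
      exact absurd this (by simp))
    have := (mul_eq_zero.mp h0).resolve_left hne
    exact sub_eq_zero.mp this
  exact Prod.ext hF hR'
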